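/- Let μ be a finite Borel measure on ℝ with total mass λ := μ(ℝ). Define the convolution powers μ^{*0} := δ₀ (Dirac mass at 0), μ^{*k} := μ^{*(k−1)} ∗ μ, and for t ≥ 0 the probability measure ν_t := e^{−λt} Σ_{k=0}^{∞} (t^k/k!) μ^{*k}. Define the operator A on bounded measurable g : ℝ → ℝ by A g(x) := ∫ (g(x+u) − g(x)) μ(du), with iterates A⁰g = g, A^{k+1}g = A(A^k g). Then for every bounded measurable g, every n ≥ 0, and every t > 0: ∫ g dν_t = g(0) + Σ_{k=1}^{n} (t^k/k!) (A^k g)(0) + (t^{n+1}/n!) ∫₀¹ (1−α)^n [ ∫ (A^{n+1} g) dν_{αt} ] dα. -/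

import Mathlib

open MeasureTheory intervalIntegral

noncomputable section

/-- Convolution powers of a measure: `μ^{*0} = δ₀`, `μ^{*k} = μ^{*(k-1)} ∗ μ`. -/
def measConvPow (μ : Measure ℝ) : ℕ → Measure ℝ
  | 0 => Measure.dirac 0
  | k + 1 => (measConvPow μ k).conv μ

/-- The time-`t` marginal law `ν_t = e^{-λt} Σ_{k≥0} (t^k/k!) μ^{*k}` of a compound
Poisson process with jump intensity measure `μ`, where `λ = μ(ℝ)`. -/
def cpLaw (μ : Measure ℝ) (t : ℝ) : Measure ℝ :=
  Measure.sum fun k : ℕ =>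
    ENNReal.ofReal (Real.exp (-(μ Set.univ).toReal * t) * t ^ k / (Nat.factorial k)) •
      measConvPow μ k

/-- The compound Poisson generator `A g(x) = ∫ (g(x+u) - g(x)) μ(du)`. -/
def cpGen (μ : Measure ℝ) (g : ℝ → ℝ) : ℝ → ℝ :=
  fun x => ∫ u, (g (x + u) - g x) ∂μ

end

noncomputable section IterDynkinAux

open MeasureTheory Real Set

/-- total mass -/
def lamr (μ : Measure ℝ) : ℝ := (μ Set.univ).toReal

lemma lamr_nonneg (μ : Measure ℝ) : 0 ≤ lamr μ := ENNReal.toReal_nonneg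

lemma convPow_finite (μ : Measure ℝ) [IsFiniteMeasure μ] :
    ∀ k, IsFiniteMeasure (measConvPow μ k)
  | 0 => by rw [measConvPow]; infer_instance
  | (k+1) => by
      rw [measConvPow]
      haveI := convPow_finite μ k
      infer_instance

lemma conv_univ (ν ρ : Measure ℝ) [SFinite ν] [SFinite ρ] :
    (ν.conv ρ) Set.univ = ν Set.univ * ρ Set.univ := by
  rw [show ν.conv ρ = Measure.map (fun p : ℝ × ℝ => p.1 + p.2) (ν.prod ρ) from rfl,
    Measure.map_apply (by fun_prop) MeasurableSet.univ]
  simp [← Set.univ_prod_univ]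

lemma convPow_univ (μ : Measure ℝ) [IsFiniteMeasure μ] :
    ∀ k, measConvPow μ k Set.univ = (μ Set.univ) ^ k
  | 0 => by rw [measConvPow]; simp
  | (k+1) => by
      haveI := convPow_finite μ k
      rw [measConvPow, conv_univ, convPow_univ μ k, pow_succ]

lemma integrable_bdd {α : Type*} [MeasurableSpace α] {ν : Measure α} [IsFiniteMeasure ν]
    {f : α → ℝ} {C : ℝ}
    (hm : Measurable f) (hC : ∀ x, |f x| ≤ C) : Integrable f ν :=
  ⟨hm.aestronglyMeasurable,
    HasFiniteIntegral.of_bounded (C := C) (ae_of_all _ (by simpa [Real.norm_eq_abs] using hC))⟩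
/-- `a_k(g) = ∫ g dμ^{*k}` -/
def aInt (μ : Measure ℝ) (g : ℝ → ℝ) (k : ℕ) : ℝ := ∫ x, g x ∂(measConvPow μ k)

/-- `T g (x) = ∫ g(x+u) dμ(u)` -/
def Tint (μ : Measure ℝ) (g : ℝ → ℝ) : ℝ → ℝ := fun x => ∫ u, g (x + u) ∂μ

variable {μ : Measure ℝ} [IsFiniteMeasure μ] {g : ℝ → ℝ} {C : ℝ}

lemma abs_aInt_le (hm : Measurable g) (hC : ∀ x, |g x| ≤ C) (k : ℕ) :
    |aInt μ g k| ≤ C * lamr μ ^ k := by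
  haveI := convPow_finite μ k
  have h := norm_integral_le_of_norm_le_const (μ := measConvPow μ k) (f := g) (C := C)
    (ae_of_all _ (by simpa [Real.norm_eq_abs] using hC))
  rw [Real.norm_eq_abs] at h
  rw [measureReal_def, convPow_univ] at h
  simpa [lamr, ENNReal.toReal_pow, aInt] using h

lemma Tint_measurable (hm : Measurable g) : Measurable (Tint μ g) := by
  have : StronglyMeasurable (fun p : ℝ × ℝ => g (p.1 + p.2)) :=
    (hm.comp measurable_add).stronglyMeasurable
  exact this.integral_prod_right'.measurable

lemma abs_Tint_le (hC : ∀ x, |g x| ≤ C) (x : ℝ) : |Tint μ g x| ≤ C * lamr μ := by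
  have h := norm_integral_le_of_norm_le_const (μ := μ) (f := fun u => g (x + u)) (C := C)
    (ae_of_all _ (by simpa [Real.norm_eq_abs] using fun u => hC (x + u)))
  rw [Real.norm_eq_abs] at h
  exact h

lemma cpGen_eq (hm : Measurable g) (hC : ∀ x, |g x| ≤ C) (x : ℝ) :
    cpGen μ g x = Tint μ g x - lamr μ * g x := by
  have h1 : Integrable (fun u => g (x + u)) μ :=
    integrable_bdd (hm.comp (measurable_const_add x)) (fun u => hC (x + u))
  rw [cpGen, integral_sub h1 (integrable_const _)]
  simp [Tint, lamr, mul_comm, measureReal_def]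

lemma cpGen_measurable (hm : Measurable g) (hC : ∀ x, |g x| ≤ C) :
    Measurable (cpGen μ g) := by
  have : cpGen μ g = fun x => Tint μ g x - lamr μ * g x := funext (cpGen_eq hm hC)
  rw [this]
  exact (Tint_measurable hm).sub (hm.const_mul _)

lemma abs_cpGen_le (hm : Measurable g) (hC : ∀ x, |g x| ≤ C) (x : ℝ) :
    |cpGen μ g x| ≤ C * lamr μ + lamr μ * C := by
  rw [cpGen_eq hm hC]
  refine (abs_sub _ _).trans (add_le_add (abs_Tint_le hC x) ?_)
  rw [abs_mul, abs_of_nonneg (lamr_nonneg μ)]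
  exact mul_le_mul_of_nonneg_left (hC x) (lamr_nonneg μ)

lemma aInt_Tint (hm : Measurable g) (hC : ∀ x, |g x| ≤ C) (k : ℕ) :
    aInt μ (Tint μ g) k = aInt μ g (k + 1) := by
  haveI := convPow_finite μ k
  rw [aInt, aInt, measConvPow,
    show (measConvPow μ k).conv μ = Measure.map (fun p : ℝ × ℝ => p.1 + p.2)
      ((measConvPow μ k).prod μ) from rfl,
    integral_map (by fun_prop) hm.aestronglyMeasurable,
    integral_prod _ (integrable_bdd (ν := ((measConvPow μ k).prod μ))
      (f := fun p : ℝ × ℝ => g (p.1 + p.2)) (hm.comp measurable_add)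
      (fun p => hC (p.1 + p.2)))]
  rfl

lemma aInt_cpGen (hm : Measurable g) (hC : ∀ x, |g x| ≤ C) (k : ℕ) :
    aInt μ (cpGen μ g) k = aInt μ g (k + 1) - lamr μ * aInt μ g k := by
  haveI := convPow_finite μ k
  have : aInt μ (cpGen μ g) k = ∫ x, (Tint μ g x - lamr μ * g x) ∂(measConvPow μ k) := by
    rw [aInt]; exact integral_congr_ae (ae_of_all _ (cpGen_eq hm hC))
  rw [this, integral_sub (integrable_bdd (Tint_measurable hm) (abs_Tint_le hC))
    ((integrable_bdd hm hC).const_mul _), MeasureTheory.integral_const_mul, ← aInt_Tint hm hC]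
  rfl

/-- `G g (s) = Σ_k a_k(g) s^k / k!` -/
def Gf (μ : Measure ℝ) (g : ℝ → ℝ) (s : ℝ) : ℝ :=
  ∑' k : ℕ, aInt μ g k * s ^ k / (Nat.factorial k)

/-- `F g (s) = e^{-λ s} G g (s) = ∫ g dν_s` -/
def Ff (μ : Measure ℝ) (g : ℝ → ℝ) (s : ℝ) : ℝ :=
  Real.exp (-(lamr μ) * s) * Gf μ g s

lemma summable_Gf (hm : Measurable g) (hC : ∀ x, |g x| ≤ C) (s : ℝ) :
    Summable fun k : ℕ => aInt μ g k * s ^ k / (Nat.factorial k) := by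
  have hC0 : 0 ≤ C := le_trans (abs_nonneg (g 0)) (hC 0)
  refine Summable.of_norm_bounded (g := fun k => C * ((lamr μ * |s|) ^ k / (Nat.factorial k)))
    ((Real.summable_pow_div_factorial _).mul_left C) (fun k => ?_)
  have hfac : (0:ℝ) < (Nat.factorial k : ℝ) := by positivity
  have hak : |aInt μ g k| ≤ C * lamr μ ^ k := abs_aInt_le hm hC k
  rw [Real.norm_eq_abs, abs_div, abs_mul, abs_pow, abs_of_nonneg hfac.le]
  calc |aInt μ g k| * |s| ^ k / (Nat.factorial k)
      ≤ (C * lamr μ ^ k) * |s| ^ k / (Nat.factorial k) := by gcongr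
    _ = C * ((lamr μ * |s|) ^ k / (Nat.factorial k)) := by rw [mul_pow]; ring

lemma Gf_hasDerivAt (hm : Measurable g) (hC : ∀ x, |g x| ≤ C) (s : ℝ) :
    HasDerivAt (Gf μ g) (Gf μ (Tint μ g) s) s := by
  have hC0 : 0 ≤ C := le_trans (abs_nonneg (g 0)) (hC 0)
  set R : ℝ := |s| + 1 with hR
  have hR1 : (1:ℝ) ≤ R := by have := abs_nonneg s; rw [hR]; linarith
  have hR0 : (0:ℝ) < R := lt_of_lt_of_le one_pos hR1
  have hsR : s ∈ Metric.ball (0:ℝ) R := by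
    simp only [Metric.mem_ball, Real.dist_eq, sub_zero, hR]
    linarith
  have hbd : ∀ (k : ℕ) (y : ℝ), y ∈ Metric.ball (0:ℝ) R →
      ‖aInt μ g k * ((k : ℝ) * y ^ (k - 1)) / (Nat.factorial k)‖ ≤
        C * ((2 * lamr μ * R) ^ k / (Nat.factorial k)) := by
    intro k y hy
    have hyR : |y| ≤ R := by
      simp only [Metric.mem_ball, Real.dist_eq, sub_zero] at hy
      exact hy.le
    have hfac : (0:ℝ) < (Nat.factorial k : ℝ) := by positivity
    rw [Real.norm_eq_abs, abs_div, abs_of_nonneg hfac.le, abs_mul, abs_mul, abs_pow,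
      Nat.abs_cast]
    have h1 : |y| ^ (k-1) ≤ R ^ (k-1) := pow_le_pow_left₀ (abs_nonneg y) hyR _
    have h2 : (k:ℝ) * R ^ (k-1) ≤ 2 ^ k * R ^ k := by
      have hk2 : (k : ℝ) ≤ 2 ^ k := by
        exact_mod_cast (Nat.lt_two_pow_self (n := k)).le
      have hRk : R ^ (k-1) ≤ R ^ k := pow_le_pow_right₀ hR1 (Nat.sub_le k 1)
      exact mul_le_mul hk2 hRk (pow_nonneg hR0.le _) (by positivity)
    have h3 : |aInt μ g k| * ((k:ℝ) * |y| ^ (k-1)) ≤ (C * lamr μ ^ k) * (2 ^ k * R ^ k) := by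
      refine mul_le_mul (abs_aInt_le hm hC k) ?_
        (mul_nonneg (Nat.cast_nonneg k) (pow_nonneg (abs_nonneg y) _))
        (mul_nonneg hC0 (pow_nonneg (lamr_nonneg μ) _))
      calc (k:ℝ) * |y| ^ (k-1) ≤ (k:ℝ) * R ^ (k-1) := by
            gcongr
        _ ≤ 2 ^ k * R ^ k := h2
    calc |aInt μ g k| * ((k:ℝ) * |y| ^ (k-1)) / (Nat.factorial k)
        ≤ (C * lamr μ ^ k) * (2 ^ k * R ^ k) / (Nat.factorial k) := by gcongr
      _ = C * ((2 * lamr μ * R) ^ k / (Nat.factorial k)) := by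
          rw [mul_pow, mul_pow]; ring
  have key : HasDerivAt (fun z => ∑' k : ℕ, aInt μ g k * z ^ k / (Nat.factorial k))
      (∑' k : ℕ, aInt μ g k * ((k : ℝ) * s ^ (k - 1)) / (Nat.factorial k)) s := by
    refine hasDerivAt_tsum_of_isPreconnected
      ((Real.summable_pow_div_factorial _).mul_left C)
      Metric.isOpen_ball (convex_ball (0:ℝ) R).isPreconnected
      (fun k y _ => ?_) hbd hsR (summable_Gf hm hC s) hsR
    exact ((hasDerivAt_pow k y).const_mul (aInt μ g k)).div_const _
  have hsum_deriv : Summable fun k : ℕ =>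
      aInt μ g k * ((k : ℝ) * s ^ (k - 1)) / (Nat.factorial k) :=
    Summable.of_norm_bounded ((Real.summable_pow_div_factorial _).mul_left C)
      (fun k => hbd k s hsR)
  have hshift : (∑' k : ℕ, aInt μ g k * ((k : ℝ) * s ^ (k - 1)) / (Nat.factorial k)) =
      Gf μ (Tint μ g) s := by
    rw [Summable.tsum_eq_zero_add hsum_deriv]
    simp only [Nat.cast_zero, zero_mul, mul_zero, zero_div, zero_add]
    rw [Gf]
    refine tsum_congr (fun k => ?_)
    rw [aInt_Tint hm hC]
    have h1 : ((k:ℝ) + 1) ≠ 0 := by positivity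
    rw [Nat.factorial_succ]
    push_cast
    field_simp
  rw [← hshift]
  exact key

lemma Gf_cpGen (hm : Measurable g) (hC : ∀ x, |g x| ≤ C) (s : ℝ) :
    Gf μ (cpGen μ g) s = Gf μ (Tint μ g) s - lamr μ * Gf μ g s := by
  have hC0 : 0 ≤ C := le_trans (abs_nonneg (g 0)) (hC 0)
  have hT : ∀ k : ℕ, aInt μ (cpGen μ g) k * s ^ k / (Nat.factorial k) =
      aInt μ (Tint μ g) k * s ^ k / (Nat.factorial k) -
        lamr μ * (aInt μ g k * s ^ k / (Nat.factorial k)) := by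
    intro k
    rw [aInt_cpGen hm hC, aInt_Tint hm hC]
    ring
  rw [Gf, tsum_congr hT,
    Summable.tsum_sub (summable_Gf (μ := μ) (Tint_measurable hm) (fun x => abs_Tint_le hC x) s)
      ((summable_Gf hm hC s).mul_left _),
    tsum_mul_left]
  rfl

lemma Ff_hasDerivAt (hm : Measurable g) (hC : ∀ x, |g x| ≤ C) (s : ℝ) :
    HasDerivAt (Ff μ g) (Ff μ (cpGen μ g) s) s := by
  have H := (((hasDerivAt_id s).const_mul (-(lamr μ))).exp).mul (Gf_hasDerivAt (μ := μ) hm hC s)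
  have : Ff μ (cpGen μ g) s =
      Real.exp (-lamr μ * s) * (-lamr μ * 1) * Gf μ g s +
        Real.exp (-lamr μ * s) * Gf μ (Tint μ g) s := by
    rw [Ff, Gf_cpGen hm hC]
    ring
  rw [this]
  exact H

lemma Ff_zero (hm : Measurable g) : Ff μ g 0 = g 0 := by
  rw [Ff, Gf]
  have h : ∀ k : ℕ, k ≠ 0 → aInt μ g k * (0:ℝ) ^ k / (Nat.factorial k) = 0 := by
    intro k hk
    rw [zero_pow hk]
    ring
  rw [tsum_eq_single 0 h]
  simp [aInt, measConvPow, integral_dirac]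

lemma Ff_continuous (hm : Measurable g) (hC : ∀ x, |g x| ≤ C) : Continuous (Ff μ g) := by
  have hd : Differentiable ℝ (Ff μ g) := fun s => (Ff_hasDerivAt hm hC s).differentiableAt
  exact hd.continuous

lemma cpLaw_coef_nonneg {s : ℝ} (hs : 0 ≤ s) (k : ℕ) :
    0 ≤ Real.exp (-(μ Set.univ).toReal * s) * s ^ k / (Nat.factorial k) :=
  div_nonneg (mul_nonneg (Real.exp_pos _).le (pow_nonneg hs k)) (Nat.cast_nonneg _)

lemma summable_cpLaw_coef {s : ℝ} :
    Summable fun k : ℕ =>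
      Real.exp (-(μ Set.univ).toReal * s) * s ^ k / (Nat.factorial k) *
        (μ Set.univ).toReal ^ k := by
  refine ((Real.summable_pow_div_factorial (s * (μ Set.univ).toReal)).mul_left
    (Real.exp (-(μ Set.univ).toReal * s))).congr (fun k => ?_)
  rw [mul_pow]
  ring

lemma cpLaw_finite {s : ℝ} (hs : 0 ≤ s) : IsFiniteMeasure (cpLaw μ s) := by
  constructor
  rw [cpLaw, Measure.sum_apply _ MeasurableSet.univ]
  have hterm : ∀ k : ℕ,
      (ENNReal.ofReal (Real.exp (-(μ Set.univ).toReal * s) * s ^ k / (Nat.factorial k)) •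
        measConvPow μ k) Set.univ =
      ENNReal.ofReal (Real.exp (-(μ Set.univ).toReal * s) * s ^ k / (Nat.factorial k) *
        (μ Set.univ).toReal ^ k) := by
    intro k
    have h2 : μ Set.univ ^ k = ENNReal.ofReal ((μ Set.univ).toReal ^ k) := by
      rw [ENNReal.ofReal_pow ENNReal.toReal_nonneg, ENNReal.ofReal_toReal (measure_ne_top μ _)]
    rw [Measure.smul_apply, smul_eq_mul, convPow_univ, h2,
      ← ENNReal.ofReal_mul (cpLaw_coef_nonneg (μ := μ) hs k)]
  rw [tsum_congr hterm,
    ← ENNReal.ofReal_tsum_of_nonneg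
      (fun k => mul_nonneg (cpLaw_coef_nonneg (μ := μ) hs k) (pow_nonneg ENNReal.toReal_nonneg k))
      summable_cpLaw_coef]
  exact ENNReal.ofReal_lt_top

lemma integral_cpLaw (hm : Measurable g) (hC : ∀ x, |g x| ≤ C) {s : ℝ} (hs : 0 ≤ s) :
    ∫ x, g x ∂(cpLaw μ s) = Ff μ g s := by
  haveI := cpLaw_finite (μ := μ) hs
  have hint : Integrable g (cpLaw μ s) := integrable_bdd hm hC
  rw [cpLaw] at hint
  rw [cpLaw, integral_sum_measure hint]
  have hterm : ∀ k : ℕ,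
      ∫ x, g x ∂(ENNReal.ofReal (Real.exp (-(μ Set.univ).toReal * s) * s ^ k /
          (Nat.factorial k)) • measConvPow μ k) =
        Real.exp (-(μ Set.univ).toReal * s) * (aInt μ g k * s ^ k / (Nat.factorial k)) := by
    intro k
    rw [MeasureTheory.integral_smul_measure,
      ENNReal.toReal_ofReal (cpLaw_coef_nonneg (μ := μ) hs k), smul_eq_mul]
    rw [show (∫ x, g x ∂(measConvPow μ k)) = aInt μ g k from rfl]
    ring
  rw [tsum_congr hterm, tsum_mul_left, Ff, Gf]
  simp only [lamr]

lemma iter_bdd (hm : Measurable g) (hC : ∀ x, |g x| ≤ C) :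
    ∀ k : ℕ, ∃ D : ℝ, Measurable ((cpGen μ)^[k] g) ∧ ∀ x, |(cpGen μ)^[k] g x| ≤ D
  | 0 => ⟨C, hm, hC⟩
  | (k + 1) => by
      obtain ⟨D, hDm, hDb⟩ := iter_bdd hm hC k
      refine ⟨D * lamr μ + lamr μ * D, ?_, ?_⟩
      · rw [Function.iterate_succ_apply']
        exact cpGen_measurable hDm hDb
      · intro x
        rw [Function.iterate_succ_apply']
        exact abs_cpGen_le hDm hDb x

lemma key_expansion (hm : Measurable g) (hC : ∀ x, |g x| ≤ C) :
    ∀ (n : ℕ) (t : ℝ), t ≠ 0 →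
      Ff μ g t = g 0 + ∑ k ∈ Finset.Icc 1 n, t ^ k / (Nat.factorial k) * ((cpGen μ)^[k] g 0) +
        t ^ (n + 1) / (Nat.factorial n) *
          ∫ α in (0:ℝ)..1, (1 - α) ^ n * Ff μ ((cpGen μ)^[n + 1] g) (α * t) := by
  intro n
  induction n with
  | zero =>
    intro t ht
    have hAm : Measurable (cpGen μ g) := cpGen_measurable hm hC
    have hAb : ∀ x, |cpGen μ g x| ≤ C * lamr μ + lamr μ * C := abs_cpGen_le hm hC
    have hftc : ∫ s in (0:ℝ)..t, Ff μ (cpGen μ g) s = Ff μ g t - Ff μ g 0 :=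
      integral_eq_sub_of_hasDerivAt (fun x _ => Ff_hasDerivAt (μ := μ) hm hC x)
        ((Ff_continuous hAm hAb).intervalIntegrable 0 t)
    have hsub : ∫ α in (0:ℝ)..1, Ff μ (cpGen μ g) (α * t) =
        t⁻¹ * ∫ s in (0:ℝ)..t, Ff μ (cpGen μ g) s := by
      have := integral_comp_mul_right (a := (0:ℝ)) (b := 1) (Ff μ (cpGen μ g)) ht
      rw [this, zero_mul, one_mul, smul_eq_mul]
    simp only [Finset.Icc_eq_empty_of_lt (by norm_num : (1:ℕ) > 0), Finset.sum_empty,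
      add_zero, zero_add, pow_one, Nat.factorial_zero, Nat.cast_one, div_one, pow_zero,
      one_mul, Function.iterate_one]
    rw [hsub, hftc, Ff_zero hm]
    field_simp
    ring
  | succ n ih =>
    intro t ht
    have base := ih t ht
    obtain ⟨D, hDm, hDb⟩ := iter_bdd (μ := μ) hm hC (n + 1)
    set h : ℝ → ℝ := (cpGen μ)^[n + 1] g with hh
    have hAm : Measurable (cpGen μ h) := cpGen_measurable hDm hDb
    have hAb : ∀ x, |cpGen μ h x| ≤ D * lamr μ + lamr μ * D := abs_cpGen_le hDm hDb
    have hn1 : ((n:ℝ) + 1) ≠ 0 := by positivity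
    -- integration by parts
    have hu : ∀ α : ℝ, HasDerivAt (fun β : ℝ => -((1 - β) ^ (n + 1)) / ((n:ℝ) + 1))
        ((1 - α) ^ n) α := by
      intro α
      have h1 : HasDerivAt (fun β : ℝ => 1 - β) (0 - 1) α :=
        (hasDerivAt_const α (1:ℝ)).sub (hasDerivAt_id α)
      have h2 := (hasDerivAt_pow (n + 1) ((1:ℝ) - α)).comp α h1
      have h3 := h2.neg.div_const ((n:ℝ) + 1)
      have h4 : (1 - α) ^ n =
          -((((n + 1 : ℕ)) : ℝ) * (1 - α) ^ ((n + 1) - 1) * (0 - 1)) / ((n:ℝ) + 1) := by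
        simp only [Nat.add_sub_cancel]
        push_cast
        field_simp
        ring
      rw [h4]
      exact h3
    have hv : ∀ α : ℝ, HasDerivAt (fun β : ℝ => Ff μ h (β * t))
        (Ff μ (cpGen μ h) (α * t) * t) α := by
      intro α
      have h1 : HasDerivAt (fun β : ℝ => β * t) t α := hasDerivAt_mul_const t
      exact (Ff_hasDerivAt (μ := μ) hDm hDb (α * t)).comp α h1
    have hu'int : IntervalIntegrable (fun α : ℝ => (1 - α) ^ n) MeasureTheory.volume 0 1 :=
      ((continuous_const.sub continuous_id).pow n).intervalIntegrable 0 1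
    have hv'int : IntervalIntegrable (fun α : ℝ => Ff μ (cpGen μ h) (α * t) * t)
        MeasureTheory.volume 0 1 :=
      (((Ff_continuous hAm hAb).comp (continuous_id.mul continuous_const)).mul
        continuous_const).intervalIntegrable 0 1
    have hibp := integral_mul_deriv_eq_deriv_mul
      (u := fun β : ℝ => -((1 - β) ^ (n + 1)) / ((n:ℝ) + 1))
      (v := fun β : ℝ => Ff μ h (β * t))
      (u' := fun α : ℝ => (1 - α) ^ n)
      (v' := fun α : ℝ => Ff μ (cpGen μ h) (α * t) * t)
      (fun α _ => hu α) (fun α _ => hv α) hu'int hv'int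
    -- rewrite the u * v' integral as a constant multiple
    have hpull : ∫ α in (0:ℝ)..1, (-((1 - α) ^ (n + 1)) / ((n:ℝ) + 1)) *
        (Ff μ (cpGen μ h) (α * t) * t) =
        (-(t / ((n:ℝ) + 1))) * ∫ α in (0:ℝ)..1, (1 - α) ^ (n + 1) * Ff μ (cpGen μ h) (α * t) := by
      rw [← intervalIntegral.integral_const_mul]
      refine intervalIntegral.integral_congr (fun α _ => ?_)
      ring
    have E1 : ∫ α in (0:ℝ)..1, (1 - α) ^ n * Ff μ h (α * t) =
        (1 / ((n:ℝ) + 1)) * h 0 +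
          (t / ((n:ℝ) + 1)) *
            ∫ α in (0:ℝ)..1, (1 - α) ^ (n + 1) * Ff μ (cpGen μ h) (α * t) := by
      rw [hpull] at hibp
      simp only [one_mul, zero_mul, sub_self, sub_zero, zero_sub, neg_neg, one_pow,
        zero_pow (Nat.succ_ne_zero n), neg_zero, zero_div] at hibp
      rw [Ff_zero hDm] at hibp
      ring_nf at hibp ⊢
      linarith [hibp]
    -- assemble
    have hfacs : (Nat.factorial (n + 1) : ℝ) = ((n:ℝ) + 1) * (Nat.factorial n) := by
      rw [Nat.factorial_succ]; push_cast; ring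
    have hiter : (cpGen μ)^[n + 1 + 1] g = cpGen μ h := by
      rw [hh, Function.iterate_succ_apply']
    rw [base, E1, Finset.sum_Icc_succ_top (Nat.succ_le_succ (Nat.zero_le n)), hiter, hfacs]
    have hfn : ((Nat.factorial n : ℝ)) ≠ 0 := by positivity
    rw [hh]
    field_simp
    ring

end IterDynkinAux

/-- Iterated Dynkin expansion for a compound Poisson process: for every bounded
measurable `g`, every `n ≥ 0` and every `t > 0`,
`∫ g dν_t = g(0) + Σ_{k=1}^n (t^k/k!) A^k g(0)
  + (t^{n+1}/n!) ∫₀¹ (1-α)^n ∫ A^{n+1} g dν_{αt} dα`. -/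
theorem iterated_dynkin_compound_poisson
    (μ : Measure ℝ) [IsFiniteMeasure μ]
    (g : ℝ → ℝ) (hgm : Measurable g) (hgb : ∃ C : ℝ, ∀ x, |g x| ≤ C)
    (n : ℕ) (t : ℝ) (ht : 0 < t) :
    ∫ x, g x ∂(cpLaw μ t) =
      g 0 + ∑ k ∈ Finset.Icc 1 n, t ^ k / (Nat.factorial k) * (cpGen μ)^[k] g 0 +
        t ^ (n + 1) / (Nat.factorial n) *
          ∫ α in (0 : ℝ)..1, (1 - α) ^ n * ∫ x, (cpGen μ)^[n + 1] g x ∂(cpLaw μ (α * t)) := by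
  obtain ⟨C, hC⟩ := hgb
  obtain ⟨D, hDm, hDb⟩ := iter_bdd (μ := μ) hgm hC (n + 1)
  have hrem : (∫ α in (0:ℝ)..1, (1 - α) ^ n *
        ∫ x, (cpGen μ)^[n + 1] g x ∂(cpLaw μ (α * t))) =
      ∫ α in (0:ℝ)..1, (1 - α) ^ n * Ff μ ((cpGen μ)^[n + 1] g) (α * t) := by
    refine intervalIntegral.integral_congr (fun α hα => ?_)
    rw [Set.uIcc_of_le (by norm_num : (0:ℝ) ≤ 1)] at hα
    have hα0 : 0 ≤ α := hα.1
    congr 1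
    exact integral_cpLaw hDm hDb (mul_nonneg hα0 ht.le)
  rw [integral_cpLaw hgm hC ht.le, hrem]
  exact key_expansion hgm hC n t ht.ne'
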